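/- arXiv:1904.03978 — 2 statements merged into one kernel-verified Lean document; each statement's English description precedes it below -/
import Mathlib

section
/- Let F be a field and f ∈ F[x] irreducible. Let h₁, h₂ ∈ F[x] satisfy IsCoprime f (x − h₁²) and IsCoprime f (x − h₂²), and suppose f does not divide h₁ + h₂. Let g₁, g₂ ∈ F[x] satisfy g₁·f + g₂·(h₁ + h₂) = 1, and let h₃ be the remainder of g₂·(h₁·h₂ + x) upon division by f. Then IsCoprime f (x − h₃²). -/
open Polynomial

/-- The addition law preserves representability: if `f` is irreducible,
`IsCoprime f (X - h₁²)`, `IsCoprime f (X - h₂²)`, `f ∤ h₁ + h₂`,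
`g₁·f + g₂·(h₁+h₂) = 1`, and `h₃ = (g₂·(h₁·h₂ + X)) % f`, then `IsCoprime f (X - h₃²)`. -/
theorem nodal_sum_representable {F : Type*} [Field F] (f h₁ h₂ g₁ g₂ : F[X])
    (hf : Irreducible f)
    (hc1 : IsCoprime f (X - h₁ ^ 2))
    (hc2 : IsCoprime f (X - h₂ ^ 2))
    (hnd : ¬ f ∣ (h₁ + h₂))
    (hbez : g₁ * f + g₂ * (h₁ + h₂) = 1) :
    IsCoprime f (X - ((g₂ * (h₁ * h₂ + X)) % f) ^ 2) := by
  rw [hf.coprime_iff_not_dvd]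
  intro hdvd
  set h₃ : F[X] := (g₂ * (h₁ * h₂ + X)) % f with hh₃
  set q : F[X] := g₂ * (h₁ * h₂ + X) / f with hq
  have hmod : h₃ = g₂ * (h₁ * h₂ + X) - f * q := by
    rw [hh₃, hq, EuclideanDomain.mod_eq_sub_mul_div]
  set c : F[X] := g₁ * (h₁ * h₂ + X) + (h₁ + h₂) * q with hc
  have heq : (h₁ + h₂) * h₃ = (h₁ * h₂ + X) - f * c := by
    rw [hmod, hc]
    linear_combination (h₁ * h₂ + X) * hbez
  have key : (h₁ + h₂) ^ 2 * (X - h₃ ^ 2) + (X - h₁ ^ 2) * (X - h₂ ^ 2)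
      = f * (2 * (h₁ * h₂ + X) * c - f * c ^ 2) := by
    linear_combination (-( (h₁ + h₂) * h₃ + (h₁ * h₂ + X) - f * c)) * heq
  have hdvd2 : f ∣ (X - h₁ ^ 2) * (X - h₂ ^ 2) := by
    have : (X - h₁ ^ 2) * (X - h₂ ^ 2)
        = f * (2 * (h₁ * h₂ + X) * c - f * c ^ 2) - (h₁ + h₂) ^ 2 * (X - h₃ ^ 2) := by
      linear_combination key
    rw [this]
    exact dvd_sub (Dvd.intro _ rfl) (Dvd.dvd.mul_left hdvd _)
  have hp : Prime f := hf.prime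
  rcases hp.dvd_mul.mp hdvd2 with h | h
  · exact hf.not_isUnit (hc1.isUnit_of_dvd' dvd_rfl h)
  · exact hf.not_isUnit (hc2.isUnit_of_dvd' dvd_rfl h)
end

section
/- Let K be a field, t ∈ K, and let L = K[y]/(y² − t) with y the image of the adjoined root. For all h₁, h₂ ∈ K with h₁ + h₂ ≠ 0, the identity (h₁ + y)·(h₂ + y) = (h₁ + h₂)·(h₃ + y) holds in L, where h₃ = (h₁·h₂ + t)/(h₁ + h₂). -/
open Polynomial

/-- In `L = K[y]/(y² − t)`, for `h₁ + h₂ ≠ 0`,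
`(h₁ + y)·(h₂ + y) = (h₁ + h₂)·(h₃ + y)` where `h₃ = (h₁·h₂ + t)/(h₁ + h₂)`. -/
theorem nodal_law_from_torus {K : Type*} [Field K] (t : K) (h₁ h₂ : K)
    (hne : h₁ + h₂ ≠ 0) :
    (algebraMap K (AdjoinRoot (X ^ 2 - C t)) h₁ + AdjoinRoot.root (X ^ 2 - C t))
        * (algebraMap K (AdjoinRoot (X ^ 2 - C t)) h₂ + AdjoinRoot.root (X ^ 2 - C t))
      = algebraMap K (AdjoinRoot (X ^ 2 - C t)) (h₁ + h₂)
        * (algebraMap K (AdjoinRoot (X ^ 2 - C t)) ((h₁ * h₂ + t) / (h₁ + h₂))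
            + AdjoinRoot.root (X ^ 2 - C t)) := by
  set f : K[X] := X ^ 2 - C t with hf
  have hr : (AdjoinRoot.root f) ^ 2 = algebraMap K (AdjoinRoot f) t := by
    have := AdjoinRoot.eval₂_root f
    simp [hf] at this
    rw [AdjoinRoot.algebraMap_eq]
    linear_combination this
  have hd : (h₁ * h₂ + t) / (h₁ + h₂) * (h₁ + h₂) = h₁ * h₂ + t :=
    div_mul_cancel₀ _ hne
  have := congrArg (algebraMap K (AdjoinRoot f)) hd
  push_cast [map_mul, map_add] at this ⊢
  linear_combination -this + hr
end
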